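/- Suppose $Y$ is a boundedly compact metric space metrised by $\tau$, $X$ is a dense subset of $Y$, and for $0 < \delta \leq \infty$ let $\sigma_\delta(a,x)$ be the infimum of sums $\sum_{i=1}^j \tau(x_i, x_{i-1})$ over finite chains $x_0 = a, x_1, \ldots, x_j = x$ in $X$ with each $\tau(x_i, x_{i-1}) \leq \delta$, and let $\sigma(a,x) = \lim_{\delta \to 0+} \sigma_\delta(a,x)$. Then $\sigma$ is a pseudometric on $X$, and whenever $a,x \in X$ with $\sigma(a,x) < \infty$ there exists a map $g : \mathbf{R} \to Y$ satisfying $g(0) = a$, $g(\sigma(a,x)) = x$, and $\mathrm{Lip}\, g \leq 1$. -/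

import Mathlib

open Filter Topology
open scoped ENNReal

/-- Given a sequence of chains from `a` to `x` with step sizes `≤ 1/(n+1)` whose lengths
tend to `L < ∞`, there is a 1-Lipschitz path from `a` to `x` parametrised on `[0, L]`. -/
lemma exists_path_of_chains {Y : Type*} [MetricSpace Y] [ProperSpace Y]
    (a x : Y) (L : ENNReal) (hL : L ≠ ⊤)
    (j : ℕ → ℕ) (c : ℕ → ℕ → Y)
    (h0 : ∀ n, c n 0 = a) (hj : ∀ n, c n (j n) = x)
    (hstep : ∀ n, ∀ i < j n, edist (c n i) (c n (i + 1)) ≤ (((n : ENNReal)) + 1)⁻¹)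
    (hsum : Tendsto (fun n => ∑ i ∈ Finset.range (j n), edist (c n i) (c n (i + 1)))
      atTop (𝓝 L)) :
    ∃ g : ℝ → Y, g 0 = a ∧ g L.toReal = x ∧ LipschitzWith 1 g := by
  classical
  -- the step bound as a real number
  set δ : ℕ → ENNReal := fun n => ((n : ENNReal) + 1)⁻¹ with hδ
  have hδ_ne_top : ∀ n, δ n ≠ ⊤ := by
    intro n
    simp [hδ, ENNReal.inv_ne_top]
  set e : ℕ → ℝ := fun n => (δ n).toReal with he
  have he_nonneg : ∀ n, 0 ≤ e n := fun n => ENNReal.toReal_nonneg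
  have hofReal_e : ∀ n, ENNReal.ofReal (e n) = δ n := fun n =>
    ENNReal.ofReal_toReal (hδ_ne_top n)
  have he_le_one : ∀ n, e n ≤ 1 := by
    intro n
    have : δ n ≤ 1 := by
      simp [hδ, ENNReal.inv_le_one]
    simpa [he] using ENNReal.toReal_mono (by norm_num) this
  have hδ0 : Tendsto δ atTop (𝓝 0) := by
    have h1 : Tendsto (fun n : ℕ => ((n + 1 : ℕ) : ENNReal)⁻¹) atTop (𝓝 0) :=
      ENNReal.tendsto_inv_nat_nhds_zero.comp (tendsto_add_atTop_nat 1)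
    simpa [hδ] using h1
  have he0 : Tendsto e atTop (𝓝 0) := by
    have := (ENNReal.tendsto_toReal (a := 0) (by simp)).comp hδ0
    simpa [he, Function.comp_def] using this
  -- finiteness of individual steps
  have hstep_ne_top : ∀ n, ∀ i < j n, edist (c n i) (c n (i + 1)) ≠ ⊤ :=
    fun n i hi => ne_top_of_le_ne_top (hδ_ne_top n) (hstep n i hi)
  -- real partial sums
  set T : ℕ → ℕ → ℝ := fun n i => ∑ m ∈ Finset.range i, (edist (c n m) (c n (m + 1))).toReal
    with hT
  have hT_nonneg : ∀ n i, 0 ≤ T n i :=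
    fun n i => Finset.sum_nonneg fun m _ => ENNReal.toReal_nonneg
  have hT_mono : ∀ n, Monotone (T n) := by
    intro n i k hik
    exact Finset.sum_le_sum_of_subset_of_nonneg (Finset.range_subset_range.2 hik)
      (fun m _ _ => ENNReal.toReal_nonneg)
  have hT0 : ∀ n, T n 0 = 0 := by intro n; simp [hT]
  -- distance between chain points is bounded by difference of partial sums
  have hchain : ∀ n, ∀ i k, i ≤ k → k ≤ j n →
      edist (c n i) (c n k) ≤ ENNReal.ofReal (T n k - T n i) := by
    intro n i k hik hkj
    have h1 : edist (c n i) (c n k) ≤ ∑ m ∈ Finset.Ico i k, edist (c n m) (c n (m + 1)) :=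
      edist_le_Ico_sum_edist _ hik
    refine h1.trans ?_
    have h2 : T n k - T n i = ∑ m ∈ Finset.Ico i k, (edist (c n m) (c n (m + 1))).toReal := by
      rw [hT]
      rw [← Finset.sum_Ico_eq_sub _ hik]
    rw [h2, ENNReal.ofReal_sum_of_nonneg (fun m _ => ENNReal.toReal_nonneg)]
    apply Finset.sum_le_sum
    intro m hm
    rw [ENNReal.ofReal_toReal]
    exact hstep_ne_top n m (lt_of_lt_of_le (Finset.mem_Ico.1 hm).2 hkj)
  -- the discrete paths
  set g' : ℕ → ℝ → Y := fun n t => c n (Nat.findGreatest (fun i => T n i ≤ t) (j n)) with hg'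
  -- approximate Lipschitz property
  have hlip : ∀ n, ∀ s t : ℝ, s ≤ t →
      edist (g' n s) (g' n t) ≤ ENNReal.ofReal (t - s) + δ n := by
    intro n s t hst
    set i := Nat.findGreatest (fun i => T n i ≤ s) (j n) with hi
    set k := Nat.findGreatest (fun i => T n i ≤ t) (j n) with hk
    have hik : i ≤ k := Nat.findGreatest_mono (fun m hm => le_trans hm hst) le_rfl
    have hkj : k ≤ j n := Nat.findGreatest_le _
    have hij : i ≤ j n := Nat.findGreatest_le _
    by_cases ht : 0 ≤ t
    · have hPk : T n k ≤ t := Nat.findGreatest_spec (P := fun i => T n i ≤ t) (Nat.zero_le _) (by simpa [hT0 n] using ht)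
      have key : T n k - T n i ≤ (t - s) + e n := by
        by_cases hs : 0 ≤ s
        · have hPi : T n i ≤ s := Nat.findGreatest_spec (P := fun i => T n i ≤ s)
            (Nat.zero_le _) (by simpa [hT0 n] using hs)
          rcases eq_or_lt_of_le hij with heq | hlt
          · -- i = j n forces k = j n
            have : k = j n := le_antisymm hkj (heq ▸ hik)
            have : T n k = T n i := by rw [this, heq]
            nlinarith [he_nonneg n, sub_nonneg.2 hst]
          · have hng : ¬ (T n (i + 1) ≤ s) :=
              Nat.findGreatest_is_greatest (Nat.lt_succ_self i) hlt
            have h1 : s < T n (i + 1) := lt_of_not_ge hng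
            have h2 : T n (i + 1) ≤ T n i + e n := by
              have : T n (i + 1) = T n i + (edist (c n i) (c n (i + 1))).toReal := by
                simp [hT, Finset.sum_range_succ]
              rw [this]
              have h3 : (edist (c n i) (c n (i + 1))).toReal ≤ e n :=
                ENNReal.toReal_mono (hδ_ne_top n) (hstep n i hlt)
              linarith
            linarith
        · -- s < 0 : i = 0
          have hi0 : i = 0 := by
            rw [hi]
            apply Nat.findGreatest_eq_zero_iff.2
            intro m hm hmj hPm
            exact absurd (le_trans (hT_nonneg n m) hPm) (by linarith)
          rw [hi0, hT0 n]
          have hs' : s < 0 := lt_of_not_ge hs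
          nlinarith [hT_nonneg n k, he_nonneg n, hPk]
      calc edist (g' n s) (g' n t) = edist (c n i) (c n k) := rfl
        _ ≤ ENNReal.ofReal (T n k - T n i) := hchain n i k hik hkj
        _ ≤ ENNReal.ofReal ((t - s) + e n) := ENNReal.ofReal_le_ofReal key
        _ ≤ ENNReal.ofReal (t - s) + ENNReal.ofReal (e n) := ENNReal.ofReal_add_le
        _ = ENNReal.ofReal (t - s) + δ n := by rw [hofReal_e]
    · -- t < 0 : both indices are 0
      have hzero : ∀ u : ℝ, u < 0 → Nat.findGreatest (fun i => T n i ≤ u) (j n) = 0 := by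
        intro u hu
        apply Nat.findGreatest_eq_zero_iff.2
        intro m hm hmj hPm
        exact absurd (le_trans (hT_nonneg n m) hPm) (by linarith)
      have h1 : i = 0 := hzero s (lt_of_le_of_lt hst (lt_of_not_ge ht))
      have h2 : k = 0 := hzero t (lt_of_not_ge ht)
      calc edist (g' n s) (g' n t) = edist (c n i) (c n k) := rfl
        _ = 0 := by rw [h1, h2, edist_self]
        _ ≤ _ := zero_le
  -- symmetric version
  have hlip' : ∀ n, ∀ s t : ℝ, edist (g' n s) (g' n t) ≤ ENNReal.ofReal |t - s| + δ n := by
    intro n s t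
    rcases le_total s t with h | h
    · rw [abs_of_nonneg (by linarith)]; exact hlip n s t h
    · rw [abs_of_nonpos (by linarith), edist_comm]
      have := hlip n t s h
      simpa [neg_sub] using this
  -- g' n 0 = a
  have hg0 : ∀ n, g' n 0 = a := by
    intro n
    have h1 : T n (Nat.findGreatest (fun i => T n i ≤ (0 : ℝ)) (j n)) ≤ 0 :=
      Nat.findGreatest_spec (P := fun i => T n i ≤ (0:ℝ)) (Nat.zero_le _) (by simp [hT0 n])
    have h2 : edist (c n 0) (g' n 0) ≤
        ENNReal.ofReal (T n (Nat.findGreatest (fun i => T n i ≤ (0 : ℝ)) (j n)) - T n 0) :=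
      hchain n 0 _ (Nat.zero_le _) (Nat.findGreatest_le _)
    have h3 : edist (c n 0) (g' n 0) = 0 := by
      refine le_antisymm (h2.trans ?_) (zero_le)
      rw [hT0 n, sub_zero, ENNReal.ofReal_eq_zero.2 h1]
    have := edist_eq_zero.1 h3
    rw [← this, h0 n]
  -- g' n at the end of the chain is x
  have hgend : ∀ n, g' n (T n (j n)) = x := by
    intro n
    have h1 : Nat.findGreatest (fun i => T n i ≤ T n (j n)) (j n) = j n :=
      le_antisymm (Nat.findGreatest_le _) (Nat.le_findGreatest le_rfl le_rfl)
    show c n (Nat.findGreatest (fun i => T n i ≤ T n (j n)) (j n)) = x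
    rw [h1, hj n]
  -- total real lengths tend to L.toReal
  have hTsum : ∀ n, T n (j n) =
      (∑ i ∈ Finset.range (j n), edist (c n i) (c n (i + 1))).toReal := by
    intro n
    rw [hT, ENNReal.toReal_sum]
    intro i hi
    exact hstep_ne_top n i (Finset.mem_range.1 hi)
  have hTj : Tendsto (fun n => T n (j n)) atTop (𝓝 L.toReal) := by
    have := (ENNReal.tendsto_toReal hL).comp hsum
    simpa [hTsum, Function.comp_def] using this
  -- each g' n t is in a fixed compact ball
  have hball : ∀ n t, g' n t ∈ Metric.closedBall a (|t| + 1) := by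
    intro n t
    have h1 : edist a (g' n t) ≤ ENNReal.ofReal |t - 0| + δ n := by
      rw [← hg0 n]; exact hlip' n 0 t
    have h2 : edist a (g' n t) ≤ ENNReal.ofReal (|t| + 1) := by
      refine h1.trans ?_
      rw [← hofReal_e n, ← ENNReal.ofReal_add (abs_nonneg _) (he_nonneg n)]
      apply ENNReal.ofReal_le_ofReal
      simp only [sub_zero]
      linarith [he_le_one n]
    rw [Metric.mem_closedBall, dist_comm]
    exact (edist_le_ofReal (by positivity)).1 h2
  -- choose an ultrafilter extending atTop and define g as the limit
  set F : Ultrafilter ℕ := Ultrafilter.of atTop with hF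
  have hFle : (F : Filter ℕ) ≤ atTop := Ultrafilter.of_le _
  have hlim : ∀ t : ℝ, ∃ y : Y, Tendsto (fun n => g' n t) F (𝓝 y) := by
    intro t
    have hcpt : IsCompact (Metric.closedBall a (|t| + 1)) := isCompact_closedBall a _
    have hmem : (F.map (fun n => g' n t) : Filter Y) ≤ 𝓟 (Metric.closedBall a (|t| + 1)) := by
      rw [Filter.le_principal_iff]
      exact Filter.mem_map.2 (Filter.univ_mem' fun n => hball n t)
    obtain ⟨y, -, hy⟩ := hcpt.ultrafilter_le_nhds (F.map (fun n => g' n t)) hmem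
    exact ⟨y, hy⟩
  choose g hg using hlim
  refine ⟨g, ?_, ?_, ?_⟩
  · -- g 0 = a
    have h1 : Tendsto (fun n => g' n 0) F (𝓝 a) := by
      simp only [hg0]; exact tendsto_const_nhds
    exact tendsto_nhds_unique (hg 0) h1
  · -- g L.toReal = x
    have h1 : Tendsto (fun n => dist (g' n L.toReal) x) atTop (𝓝 0) := by
      have hb : ∀ n, dist (g' n L.toReal) x ≤ |T n (j n) - L.toReal| + e n := by
        intro n
        have := hlip' n L.toReal (T n (j n))
        rw [hgend n] at this
        rw [← hofReal_e n, ← ENNReal.ofReal_add (abs_nonneg _) (he_nonneg n)] at this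
        exact (edist_le_ofReal (by positivity)).1 this
      have hrhs : Tendsto (fun n => |T n (j n) - L.toReal| + e n) atTop (𝓝 0) := by
        have h2 : Tendsto (fun n => |T n (j n) - L.toReal|) atTop (𝓝 0) := by
          have := (hTj.sub_const L.toReal).abs
          simpa using this
        simpa using h2.add he0
      exact squeeze_zero (fun n => dist_nonneg) hb hrhs
    have h2 : Tendsto (fun n => g' n L.toReal) atTop (𝓝 x) :=
      tendsto_iff_dist_tendsto_zero.2 h1
    exact tendsto_nhds_unique (hg L.toReal) (h2.mono_left hFle)
  · -- Lipschitz
    apply LipschitzWith.of_edist_le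
    intro s t
    have h1 : Tendsto (fun n => edist (g' n s) (g' n t)) F (𝓝 (edist (g s) (g t))) :=
      (hg s).edist (hg t)
    have h2 : Tendsto (fun n => ENNReal.ofReal |t - s| + δ n) F
        (𝓝 (ENNReal.ofReal |t - s| + 0)) :=
      (tendsto_const_nhds.add hδ0).mono_left hFle
    have h3 : edist (g s) (g t) ≤ ENNReal.ofReal |t - s| + 0 :=
      le_of_tendsto_of_tendsto' h1 h2 (fun n => hlip' n s t)
    rw [add_zero] at h3
    rw [edist_dist s t, Real.dist_eq, abs_sub_comm]
    exact h3

/-- the chain pseudometrics `σ_δ` on a dense subset `X` of a boundedly compact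
metric space `Y` converge, as `δ → 0+` (equivalently, as a supremum over `δ > 0`), to a
pseudometric `σ` on `X`; and whenever `σ a x < ∞` there is a `1`-Lipschitz path in `Y` from
`a` to `x` parametrised on `[0, σ a x]`. -/
theorem chain_pseudometric_path {Y : Type*} [MetricSpace Y] [ProperSpace Y]
    (X : Set Y) (hX : Dense X)
    (σδ : ENNReal → Y → Y → ENNReal)
    (hσδ : ∀ δ a x, σδ δ a x =
      ⨅ (j : ℕ) (c : ℕ → Y) (_ : c 0 = a) (_ : c j = x) (_ : ∀ i ≤ j, c i ∈ X)
        (_ : ∀ i < j, edist (c i) (c (i + 1)) ≤ δ),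
        ∑ i ∈ Finset.range j, edist (c i) (c (i + 1)))
    (σ : Y → Y → ENNReal)
    (hσ : ∀ a x, σ a x = ⨆ (δ : ENNReal) (_ : 0 < δ), σδ δ a x) :
    (∀ a ∈ X, σ a a = 0) ∧
    (∀ a ∈ X, ∀ x ∈ X, σ a x = σ x a) ∧
    (∀ a ∈ X, ∀ x ∈ X, ∀ c ∈ X, σ a c ≤ σ a x + σ x c) ∧
    (∀ a ∈ X, ∀ x ∈ X, σ a x ≠ ⊤ →
      ∃ g : ℝ → Y, g 0 = a ∧ g ((σ a x).toReal) = x ∧ LipschitzWith 1 g) := by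
  classical
  -- σδ is at most the length of any admissible chain
  have chain_le : ∀ (δ : ENNReal) (a x : Y) (j : ℕ) (c : ℕ → Y), c 0 = a → c j = x →
      (∀ i ≤ j, c i ∈ X) → (∀ i < j, edist (c i) (c (i + 1)) ≤ δ) →
      σδ δ a x ≤ ∑ i ∈ Finset.range j, edist (c i) (c (i + 1)) := by
    intro δ a x j c h0 hj hmem hstep
    rw [hσδ]
    exact iInf_le_of_le j <| iInf_le_of_le c <| iInf_le_of_le h0 <| iInf_le_of_le hj <|
      iInf_le_of_le hmem <| iInf_le _ hstep
  -- σδ is antitone in δ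
  have anti : ∀ (δ δ' : ENNReal) (a x : Y), δ ≤ δ' → σδ δ' a x ≤ σδ δ a x := by
    intro δ δ' a x hδ
    conv_rhs => rw [hσδ]
    simp only [le_iInf_iff]
    intro j c h0 hj hmem hstep
    exact chain_le δ' a x j c h0 hj hmem fun i hi => (hstep i hi).trans hδ
  -- each σδ with δ > 0 is at most σ
  have le_σ : ∀ (δ : ENNReal) (a x : Y), 0 < δ → σδ δ a x ≤ σ a x := by
    intro δ a x hδ
    rw [hσ]
    exact le_iSup₂ (f := fun δ (_ : 0 < δ) => σδ δ a x) δ hδ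
  -- reversal: σδ is symmetric
  have symmδ : ∀ (δ : ENNReal) (a x : Y), σδ δ a x ≤ σδ δ x a := by
    intro δ a x
    conv_rhs => rw [hσδ]
    simp only [le_iInf_iff]
    intro j c h0 hj hmem hstep
    have hsum : ∑ i ∈ Finset.range j, edist (c (j - i)) (c (j - (i + 1))) =
        ∑ i ∈ Finset.range j, edist (c i) (c (i + 1)) := by
      rw [← Finset.sum_range_reflect (fun i => edist (c i) (c (i + 1))) j]
      refine Finset.sum_congr rfl fun i hi => ?_
      have hi' := Finset.mem_range.1 hi
      have h1 : j - (i + 1) = j - 1 - i := by omega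
      have h2 : j - i = (j - 1 - i) + 1 := by omega
      rw [h1, h2, edist_comm]
    rw [← hsum]
    refine chain_le δ a x j (fun i => c (j - i)) ?_ ?_ ?_ ?_
    · simp [hj]
    · simp [h0]
    · intro i _; exact hmem (j - i) (Nat.sub_le _ _)
    · intro i hi
      have h1 : j - (i + 1) = j - 1 - i := by omega
      have h2 : j - i = (j - 1 - i) + 1 := by omega
      show edist (c (j - i)) (c (j - (i + 1))) ≤ δ
      rw [h1, h2, edist_comm]
      exact hstep (j - 1 - i) (by omega)
  -- triangle inequality at the σδ level
  have triδ : ∀ (δ : ENNReal) (a x c : Y), x ∈ X → σδ δ a c ≤ σδ δ a x + σδ δ x c := by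
    intro δ a x c hx
    refine ENNReal.le_of_forall_pos_le_add fun ε hε htop => ?_
    have hax : σδ δ a x < ⊤ := lt_of_le_of_lt le_self_add htop
    have hxc : σδ δ x c < ⊤ := lt_of_le_of_lt le_add_self htop
    have hε2 : (0 : ENNReal) < (ε / 2 : NNReal) := by
      have : (0 : NNReal) < ε / 2 := by positivity
      exact_mod_cast this
    -- extract nearly optimal chains
    have h1 : σδ δ a x < σδ δ a x + (ε / 2 : NNReal) :=
      ENNReal.lt_add_right hax.ne (by exact_mod_cast hε2.ne')
    have h2 : σδ δ x c < σδ δ x c + (ε / 2 : NNReal) :=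
      ENNReal.lt_add_right hxc.ne (by exact_mod_cast hε2.ne')
    nth_rewrite 1 [hσδ] at h1
    nth_rewrite 1 [hσδ] at h2
    simp only [iInf_lt_iff] at h1 h2
    obtain ⟨j1, c1, e10, e1j, m1, s1, hs1⟩ := h1
    obtain ⟨j2, c2, e20, e2j, m2, s2, hs2⟩ := h2
    -- concatenate
    set d : ℕ → Y := fun i => if i < j1 then c1 i else c2 (i - j1) with hd
    have hd_eq1 : ∀ i ≤ j1, d i = c1 i := by
      intro i hi
      rcases lt_or_eq_of_le hi with h | h
      · simp [hd, h]
      · subst h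
        simp only [hd, lt_irrefl, if_neg (lt_irrefl _), Nat.sub_self]
        rw [e20, e1j]
    have hd_eq2 : ∀ i, j1 ≤ i → d i = c2 (i - j1) := by
      intro i hi
      rcases eq_or_lt_of_le hi with h | h
      · rw [← h, hd_eq1 j1 le_rfl, Nat.sub_self, e1j, e20]
      · simp [hd, Nat.not_lt.2 hi]
    have hσac : σδ δ a c ≤ ∑ i ∈ Finset.range j1, edist (c1 i) (c1 (i + 1)) +
        ∑ i ∈ Finset.range j2, edist (c2 i) (c2 (i + 1)) := by
      have hsum : ∑ i ∈ Finset.range (j1 + j2), edist (d i) (d (i + 1)) =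
          ∑ i ∈ Finset.range j1, edist (c1 i) (c1 (i + 1)) +
          ∑ i ∈ Finset.range j2, edist (c2 i) (c2 (i + 1)) := by
        rw [← Finset.sum_range_add_sum_Ico _ (Nat.le_add_right j1 j2)]
        congr 1
        · refine Finset.sum_congr rfl fun i hi => ?_
          have hi' := Finset.mem_range.1 hi
          rw [hd_eq1 i hi'.le, hd_eq1 (i + 1) hi']
        · rw [Finset.sum_Ico_eq_sum_range]
          simp only [Nat.add_sub_cancel_left]
          refine Finset.sum_congr rfl fun i hi => ?_
          rw [hd_eq2 (j1 + i) (Nat.le_add_right _ _),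
            hd_eq2 (j1 + i + 1) (by omega)]
          congr 2 <;> omega
      rw [← hsum]
      refine chain_le δ a c (j1 + j2) d ?_ ?_ ?_ ?_
      · rcases Nat.eq_zero_or_pos j1 with h | h
        · subst h
          have hax : a = x := by rw [← e10, e1j]
          rw [hd_eq2 0 le_rfl]
          simp [e20, hax]
        · rw [hd_eq1 0 (by omega), e10]
      · rw [hd_eq2 (j1 + j2) (Nat.le_add_right _ _), Nat.add_sub_cancel_left, e2j]
      · intro i hi
        rcases le_or_gt i j1 with h | h
        · rw [hd_eq1 i h]; exact m1 i h
        · rw [hd_eq2 i h.le]; exact m2 (i - j1) (by omega)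
      · intro i hi
        rcases lt_or_ge i j1 with h | h
        · rw [hd_eq1 i h.le, hd_eq1 (i + 1) h]; exact s1 i h
        · rw [hd_eq2 i h, hd_eq2 (i + 1) (by omega)]
          have : i + 1 - j1 = (i - j1) + 1 := by omega
          rw [this]
          exact s2 (i - j1) (by omega)
    calc σδ δ a c ≤ _ := hσac
      _ ≤ (σδ δ a x + (ε / 2 : NNReal)) + (σδ δ x c + (ε / 2 : NNReal)) :=
        add_le_add hs1.le hs2.le
      _ = σδ δ a x + σδ δ x c + ((ε / 2 : NNReal) + (ε / 2 : NNReal)) := by ring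
      _ = σδ δ a x + σδ δ x c + ε := by
        rw [← ENNReal.coe_add, add_halves]
  refine ⟨?_, ?_, ?_, ?_⟩
  · -- reflexivity
    intro a ha
    rw [hσ]
    refine le_antisymm (iSup₂_le fun δ hδ => ?_) (zero_le)
    have := chain_le δ a a 0 (fun _ => a) rfl rfl (fun i hi => by
      simp at hi; simp [hi, ha]) (fun i hi => absurd hi (Nat.not_lt_zero i))
    simpa using this
  · -- symmetry
    intro a _ x _
    rw [hσ, hσ]
    congr 1
    ext δ
    congr 1
    ext hδ
    exact le_antisymm (symmδ δ a x) (symmδ δ x a)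
  · -- triangle inequality
    intro a _ x hx c _
    rw [hσ a c]
    refine iSup₂_le fun δ hδ => ?_
    exact (triδ δ a x c hx).trans (add_le_add (le_σ δ a x hδ) (le_σ δ x c hδ))
  · -- existence of the path
    intro a ha x hx htop
    set L := σ a x with hL
    -- the sequence δ n = 1/(n+1)
    set δs : ℕ → ENNReal := fun n => ((n : ENNReal) + 1)⁻¹ with hδs
    have hδs_pos : ∀ n, 0 < δs n := by
      intro n
      simp [hδs, ENNReal.inv_pos]
    have hδs_ne_top : ∀ n, δs n ≠ ⊤ := by
      intro n; simp [hδs, ENNReal.inv_ne_top]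
    -- monotone sequence σδ (δs n) a x with supremum L
    have hmono : Monotone fun n => σδ (δs n) a x := by
      intro m n hmn
      apply anti
      simp only [hδs]
      exact ENNReal.inv_le_inv.2 (by gcongr <;> exact_mod_cast hmn)
    have hsup : ⨆ n, σδ (δs n) a x = L := by
      refine le_antisymm (iSup_le fun n => le_σ _ a x (hδs_pos n)) ?_
      rw [hL, hσ]
      refine iSup₂_le fun δ hδ => ?_
      obtain ⟨n, hn⟩ := ENNReal.exists_inv_nat_lt hδ.ne'
      refine le_trans ?_ (le_iSup _ n)
      apply anti
      refine le_trans ?_ hn.le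
      simp only [hδs]
      exact ENNReal.inv_le_inv.2 (by exact_mod_cast Nat.le_succ n)
    have hσδ_tendsto : Tendsto (fun n => σδ (δs n) a x) atTop (𝓝 L) := by
      rw [← hsup]
      exact tendsto_atTop_iSup hmono
    -- extract chains
    have hchains : ∀ n : ℕ, ∃ (j : ℕ) (c : ℕ → Y), c 0 = a ∧ c j = x ∧
        (∀ i ≤ j, c i ∈ X) ∧ (∀ i < j, edist (c i) (c (i + 1)) ≤ δs n) ∧
        σδ (δs n) a x ≤ ∑ i ∈ Finset.range j, edist (c i) (c (i + 1)) ∧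
        ∑ i ∈ Finset.range j, edist (c i) (c (i + 1)) < σδ (δs n) a x + δs n := by
      intro n
      have hfin : σδ (δs n) a x ≠ ⊤ :=
        fun h => htop (le_antisymm le_top (h ▸ le_σ _ a x (hδs_pos n)))
      have h1 : σδ (δs n) a x < σδ (δs n) a x + δs n :=
        ENNReal.lt_add_right hfin (hδs_pos n).ne'
      conv_lhs at h1 => rw [hσδ]
      simp only [iInf_lt_iff] at h1
      obtain ⟨j, c, h0, hjx, hmem, hstep, hlt⟩ := h1
      exact ⟨j, c, h0, hjx, hmem, hstep,
        chain_le _ a x j c h0 hjx hmem hstep, hlt⟩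
    choose j ch hch0 hchj hchmem hchstep hchge hchlt using hchains
    -- chain lengths tend to L
    have hsum_tendsto : Tendsto
        (fun n => ∑ i ∈ Finset.range (j n), edist (ch n i) (ch n (i + 1))) atTop (𝓝 L) := by
      have hub : Tendsto (fun n => σδ (δs n) a x + δs n) atTop (𝓝 (L + 0)) := by
        refine hσδ_tendsto.add ?_
        have h1 : Tendsto (fun n : ℕ => ((n + 1 : ℕ) : ENNReal)⁻¹) atTop (𝓝 0) :=
          ENNReal.tendsto_inv_nat_nhds_zero.comp (tendsto_add_atTop_nat 1)
        simpa [hδs] using h1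
      rw [add_zero] at hub
      exact tendsto_of_tendsto_of_tendsto_of_le_of_le hσδ_tendsto hub
        (fun n => hchge n) (fun n => (hchlt n).le)
    obtain ⟨g, hg0, hgL, hglip⟩ := exists_path_of_chains a x L htop j ch hch0 hchj
      (fun n i hi => hchstep n i hi) hsum_tendsto
    exact ⟨g, hg0, hgL, hglip⟩
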